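/- Let T > 0, a ∈ ℝ, σ > 0, θ, r ∈ [0, T], let g : [0,T] → ℝ be continuous, and let K : [0,T] × [0,T] → ℝ be such that for each fixed second argument ζ ∈ {θ, r}, the function s ↦ K(s,ζ) is nonnegative and nondecreasing on [ζ, T] and K(s,ζ) = 0 for s < ζ. Set Z := ∫₀ᵀ e^{a s + g(s)} ds and D := σ² ∫_{max(θ,r)}^T K(s,θ) K(s,r) e^{a s + g(s)} ds / Z − σ² (∫_r^T K(s,r) e^{a s + g(s)} ds)(∫_θ^T K(s,θ) e^{a s + g(s)} ds) / Z². Then 0 ≤ D ≤ 2σ² K(T,θ) K(T,r). -/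

import Mathlib

open MeasureTheory

lemma cheb_assoc {μ : Measure ℝ} [IsFiniteMeasure μ] {f g w : ℝ → ℝ}
    (hf : Monotone f) (hg : Monotone g) (hw0 : ∀ x, 0 ≤ w x)
    (hiw : Integrable w μ) (hifw : Integrable (fun x => f x * w x) μ)
    (higw : Integrable (fun x => g x * w x) μ)
    (hifgw : Integrable (fun x => f x * g x * w x) μ) :
    (∫ x, f x * w x ∂μ) * (∫ x, g x * w x ∂μ) ≤
      (∫ x, f x * g x * w x ∂μ) * (∫ x, w x ∂μ) := by
  have hA : Integrable (fun p : ℝ × ℝ => (f p.1 * g p.1 * w p.1) * w p.2) (μ.prod μ) :=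
    hifgw.mul_prod hiw
  have hB : Integrable (fun p : ℝ × ℝ => (f p.1 * w p.1) * (g p.2 * w p.2)) (μ.prod μ) :=
    hifw.mul_prod higw
  have hC : Integrable (fun p : ℝ × ℝ => (g p.1 * w p.1) * (f p.2 * w p.2)) (μ.prod μ) :=
    higw.mul_prod hifw
  have hE : Integrable (fun p : ℝ × ℝ => w p.1 * (f p.2 * g p.2 * w p.2)) (μ.prod μ) :=
    hiw.mul_prod hifgw
  have hnn : ∀ p : ℝ × ℝ, 0 ≤ (f p.1 - f p.2) * (g p.1 - g p.2) * (w p.1 * w p.2) := by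
    intro p
    have hfg : 0 ≤ (f p.1 - f p.2) * (g p.1 - g p.2) := by
      rcases le_total p.1 p.2 with h | h
      · nlinarith [mul_nonneg (sub_nonneg.2 (hf h)) (sub_nonneg.2 (hg h))]
      · nlinarith [mul_nonneg (sub_nonneg.2 (hf h)) (sub_nonneg.2 (hg h))]
    exact mul_nonneg hfg (mul_nonneg (hw0 _) (hw0 _))
  have hfun : (fun p : ℝ × ℝ => (f p.1 - f p.2) * (g p.1 - g p.2) * (w p.1 * w p.2)) =
      fun p : ℝ × ℝ => ((f p.1 * g p.1 * w p.1) * w p.2 - (f p.1 * w p.1) * (g p.2 * w p.2))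
        - (g p.1 * w p.1) * (f p.2 * w p.2) + w p.1 * (f p.2 * g p.2 * w p.2) := by
    funext p; ring
  have h0 : 0 ≤ ∫ p : ℝ × ℝ, (f p.1 - f p.2) * (g p.1 - g p.2) * (w p.1 * w p.2) ∂(μ.prod μ) :=
    integral_nonneg hnn
  have hAB : Integrable (fun p : ℝ × ℝ =>
      (f p.1 * g p.1 * w p.1) * w p.2 - (f p.1 * w p.1) * (g p.2 * w p.2)) (μ.prod μ) := hA.sub hB
  have hABC : Integrable (fun p : ℝ × ℝ =>
      (f p.1 * g p.1 * w p.1) * w p.2 - (f p.1 * w p.1) * (g p.2 * w p.2)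
        - (g p.1 * w p.1) * (f p.2 * w p.2)) (μ.prod μ) := hAB.sub hC
  rw [hfun, integral_add hABC hE, integral_sub hAB hC, integral_sub hA hB,
    integral_prod_mul (μ := μ) (ν := μ) (fun x => f x * g x * w x) w,
    integral_prod_mul (μ := μ) (ν := μ) (fun x => f x * w x) (fun x => g x * w x),
    integral_prod_mul (μ := μ) (ν := μ) (fun x => g x * w x) (fun x => f x * w x),
    integral_prod_mul (μ := μ) (ν := μ) w (fun x => f x * g x * w x)] at h0
  linarith

/-- An interval integral of a function vanishing on `(0, c)` equals the set integral over
`Ioc 0 T`. -/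
lemma shift_integral {c T : ℝ} (hc0 : 0 ≤ c) (hcT : c ≤ T) {h : ℝ → ℝ}
    (hint : IntegrableOn h (Set.Ioc 0 T))
    (hzero : ∀ s, 0 < s → s < c → h s = 0) :
    ∫ s in c..T, h s = ∫ s in Set.Ioc 0 T, h s := by
  rw [intervalIntegral.integral_of_le hcT]
  have hsplit : Set.Ioc (0 : ℝ) T = Set.Ioc 0 c ∪ Set.Ioc c T :=
    (Set.Ioc_union_Ioc_eq_Ioc hc0 hcT).symm
  rw [hsplit, setIntegral_union (Set.Ioc_disjoint_Ioc_of_le le_rfl) measurableSet_Ioc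
    (hint.mono_set (hsplit ▸ Set.subset_union_left))
    (hint.mono_set (hsplit ▸ Set.subset_union_right))]
  have h1 : ∫ s in Set.Ioc 0 c, h s = 0 := by
    rw [integral_Ioc_eq_integral_Ioo,
      setIntegral_congr_fun measurableSet_Ioo (g := fun _ => (0 : ℝ))
        (fun s hs => hzero s hs.1 hs.2)]
    simp
  rw [h1, zero_add]

/-- Pathwise second Malliavin-derivative bound (3.3): with `Z = ∫₀ᵀ e^{as+g(s)} ds` and
`D = σ² ∫_{max(θ,r)}^T K(s,θ)K(s,r)e^{as+g(s)} ds / Z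
   − σ² (∫_r^T K(s,r)e^{as+g(s)} ds)(∫_θ^T K(s,θ)e^{as+g(s)} ds) / Z²`,
if `s ↦ K(s,ζ)` is nonnegative and nondecreasing on `[ζ,T]` and vanishes for `s < ζ`
(for `ζ ∈ {θ, r}`), then `0 ≤ D ≤ 2σ² K(T,θ) K(T,r)`. -/
theorem pathwise_second_derivative_bound
    (T a σ θ r : ℝ) (hT : 0 < T) (hσ : 0 < σ)
    (hθ : θ ∈ Set.Icc (0 : ℝ) T) (hr : r ∈ Set.Icc (0 : ℝ) T)
    (g : ℝ → ℝ) (hg : ContinuousOn g (Set.Icc 0 T))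
    (K : ℝ → ℝ → ℝ)
    (hKθnn : ∀ s ∈ Set.Icc θ T, 0 ≤ K s θ)
    (hKθmono : MonotoneOn (fun s => K s θ) (Set.Icc θ T))
    (hKθzero : ∀ s, s < θ → K s θ = 0)
    (hKrnn : ∀ s ∈ Set.Icc r T, 0 ≤ K s r)
    (hKrmono : MonotoneOn (fun s => K s r) (Set.Icc r T))
    (hKrzero : ∀ s, s < r → K s r = 0)
    (Z D : ℝ)
    (hZ : Z = ∫ s in (0 : ℝ)..T, Real.exp (a * s + g s))
    (hD : D = σ ^ 2 * (∫ s in (max θ r)..T, K s θ * K s r * Real.exp (a * s + g s)) / Z -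
        σ ^ 2 * ((∫ s in r..T, K s r * Real.exp (a * s + g s)) *
          (∫ s in θ..T, K s θ * Real.exp (a * s + g s))) / Z ^ 2) :
    0 ≤ D ∧ D ≤ 2 * σ ^ 2 * K T θ * K T r := by
  obtain ⟨hθ0, hθT⟩ := hθ
  obtain ⟨hr0, hrT⟩ := hr
  set w : ℝ → ℝ := fun s => Real.exp (a * s + g s) with hw
  set F : ℝ → ℝ := fun s => if s < θ then (0 : ℝ) else K (min s T) θ with hF
  set G : ℝ → ℝ := fun s => if s < r then (0 : ℝ) else K (min s T) r with hG
  set μ : Measure ℝ := volume.restrict (Set.Ioc 0 T) with hμ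
  haveI : IsFiniteMeasure μ := by
    constructor
    rw [hμ, Measure.restrict_apply_univ, Real.volume_Ioc]
    exact ENNReal.ofReal_lt_top
  have hwpos : ∀ s, 0 < w s := fun s => Real.exp_pos _
  -- basic facts about F
  have hminθ : ∀ s, ¬ s < θ → min s T ∈ Set.Icc θ T :=
    fun s hs => ⟨le_min (not_lt.1 hs) hθT, min_le_right _ _⟩
  have hminr : ∀ s, ¬ s < r → min s T ∈ Set.Icc r T :=
    fun s hs => ⟨le_min (not_lt.1 hs) hrT, min_le_right _ _⟩
  have hFnn : ∀ s, 0 ≤ F s := by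
    intro s; rw [hF]; dsimp only
    split_ifs with h
    · exact le_refl 0
    · exact hKθnn _ (hminθ s h)
  have hGnn : ∀ s, 0 ≤ G s := by
    intro s; rw [hG]; dsimp only
    split_ifs with h
    · exact le_refl 0
    · exact hKrnn _ (hminr s h)
  have hKTθ : 0 ≤ K T θ := hKθnn T ⟨hθT, le_refl T⟩
  have hKTr : 0 ≤ K T r := hKrnn T ⟨hrT, le_refl T⟩
  have hFbd : ∀ s, F s ≤ K T θ := by
    intro s; rw [hF]; dsimp only
    split_ifs with h
    · exact hKTθ
    · exact hKθmono (hminθ s h) ⟨hθT, le_refl T⟩ (min_le_right _ _)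
  have hGbd : ∀ s, G s ≤ K T r := by
    intro s; rw [hG]; dsimp only
    split_ifs with h
    · exact hKTr
    · exact hKrmono (hminr s h) ⟨hrT, le_refl T⟩ (min_le_right _ _)
  have hFmono : Monotone F := by
    intro x y hxy
    rw [hF]; dsimp only
    split_ifs with hx hy hy
    · exact le_refl 0
    · exact hKθnn _ (hminθ y hy)
    · exact absurd (lt_of_le_of_lt hxy hy) hx
    · exact hKθmono (hminθ x hx) (hminθ y hy) (min_le_min hxy (le_refl T))
  have hGmono : Monotone G := by
    intro x y hxy
    rw [hG]; dsimp only
    split_ifs with hx hy hy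
    · exact le_refl 0
    · exact hKrnn _ (hminr y hy)
    · exact absurd (lt_of_le_of_lt hxy hy) hx
    · exact hKrmono (hminr x hx) (hminr y hy) (min_le_min hxy (le_refl T))
  have hFeq : ∀ s ∈ Set.Icc θ T, F s = K s θ := by
    intro s hs
    rw [hF]; dsimp only
    rw [if_neg (not_lt.2 hs.1), min_eq_left hs.2]
  have hGeq : ∀ s ∈ Set.Icc r T, G s = K s r := by
    intro s hs
    rw [hG]; dsimp only
    rw [if_neg (not_lt.2 hs.1), min_eq_left hs.2]
  have hFzero : ∀ s, s < θ → F s = 0 := by intro s hs; rw [hF]; exact if_pos hs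
  have hGzero : ∀ s, s < r → G s = 0 := by intro s hs; rw [hG]; exact if_pos hs
  -- integrability
  have hw_cont : ContinuousOn w (Set.Icc 0 T) := by
    apply Real.continuous_exp.comp_continuousOn
    exact ((continuous_const.mul continuous_id).continuousOn.add hg)
  have hwint : IntegrableOn w (Set.Ioc 0 T) :=
    (hw_cont.integrableOn_Icc).mono_set Set.Ioc_subset_Icc_self
  have hFmeas : Measurable F := hFmono.measurable
  have hGmeas : Measurable G := hGmono.measurable
  have hiFw : Integrable (fun x => F x * w x) μ :=
    hwint.bdd_mul hFmeas.aestronglyMeasurable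
      (c := K T θ) (Filter.Eventually.of_forall fun x => by rw [Real.norm_eq_abs, abs_of_nonneg (hFnn x)]; exact hFbd x)
  have hiGw : Integrable (fun x => G x * w x) μ :=
    hwint.bdd_mul hGmeas.aestronglyMeasurable
      (c := K T r) (Filter.Eventually.of_forall fun x => by rw [Real.norm_eq_abs, abs_of_nonneg (hGnn x)]; exact hGbd x)
  have hiFGw : Integrable (fun x => F x * G x * w x) μ :=
    hwint.bdd_mul (hFmeas.mul hGmeas).aestronglyMeasurable
      (c := K T θ * K T r) (Filter.Eventually.of_forall fun x => by
        rw [Real.norm_eq_abs, abs_of_nonneg (mul_nonneg (hFnn x) (hGnn x))]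
        exact mul_le_mul (hFbd x) (hGbd x) (hGnn x) hKTθ)
  -- rewrite Z
  have hZset : Z = ∫ x, w x ∂μ := by
    rw [hZ, intervalIntegral.integral_of_le hT.le]
  have hZpos : 0 < Z := by
    rw [hZset]
    rw [show (∫ x, w x ∂μ) = ∫ x in Set.Ioc 0 T, w x from rfl]
    rw [setIntegral_pos_iff_support_of_nonneg_ae
      (Filter.Eventually.of_forall fun x => (hwpos x).le) hwint]
    have hsub : Set.Ioc 0 T ⊆ Function.support w := fun x _ => (hwpos x).ne'
    rw [Set.inter_eq_self_of_subset_right hsub, Real.volume_Ioc]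
    simp [hT]
  -- rewrite the three interval integrals
  have hintθ : (∫ s in θ..T, K s θ * w s) = ∫ x, F x * w x ∂μ := by
    rw [show (∫ s in θ..T, K s θ * w s) = ∫ s in θ..T, F s * w s from
      intervalIntegral.integral_congr (fun s hs => by
        rw [Set.uIcc_of_le hθT] at hs
        rw [hFeq s hs])]
    exact shift_integral hθ0 hθT hiFw
      (fun s _ hs => by rw [hFzero s hs, zero_mul])
  have hintr : (∫ s in r..T, K s r * w s) = ∫ x, G x * w x ∂μ := by
    rw [show (∫ s in r..T, K s r * w s) = ∫ s in r..T, G s * w s from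
      intervalIntegral.integral_congr (fun s hs => by
        rw [Set.uIcc_of_le hrT] at hs
        rw [hGeq s hs])]
    exact shift_integral hr0 hrT hiGw
      (fun s _ hs => by rw [hGzero s hs, zero_mul])
  have hmax0 : 0 ≤ max θ r := le_trans hθ0 (le_max_left _ _)
  have hmaxT : max θ r ≤ T := max_le hθT hrT
  have hintm : (∫ s in (max θ r)..T, K s θ * K s r * w s) = ∫ x, F x * G x * w x ∂μ := by
    rw [show (∫ s in (max θ r)..T, K s θ * K s r * w s)
        = ∫ s in (max θ r)..T, F s * G s * w s from
      intervalIntegral.integral_congr (fun s hs => by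
        rw [Set.uIcc_of_le hmaxT] at hs
        rw [hFeq s ⟨le_trans (le_max_left _ _) hs.1, hs.2⟩,
          hGeq s ⟨le_trans (le_max_right _ _) hs.1, hs.2⟩])]
    refine shift_integral hmax0 hmaxT hiFGw (fun s _ hs => ?_)
    rcases lt_max_iff.1 hs with h | h
    · rw [hFzero s h, zero_mul, zero_mul]
    · rw [hGzero s h, mul_zero, zero_mul]
  -- key inequalities
  have hcheb : (∫ x, F x * w x ∂μ) * (∫ x, G x * w x ∂μ) ≤
      (∫ x, F x * G x * w x ∂μ) * Z := by
    rw [hZset]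
    exact cheb_assoc hFmono hGmono (fun x => (hwpos x).le) hwint hiFw hiGw hiFGw
  have hBnn : 0 ≤ ∫ x, G x * w x ∂μ :=
    integral_nonneg (fun x => mul_nonneg (hGnn x) (hwpos x).le)
  have hCnn : 0 ≤ ∫ x, F x * w x ∂μ :=
    integral_nonneg (fun x => mul_nonneg (hFnn x) (hwpos x).le)
  have hAnn : 0 ≤ ∫ x, F x * G x * w x ∂μ :=
    integral_nonneg (fun x => mul_nonneg (mul_nonneg (hFnn x) (hGnn x)) (hwpos x).le)
  have hup : (∫ x, F x * G x * w x ∂μ) ≤ K T θ * K T r * Z := by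
    rw [hZset, ← integral_const_mul]
    refine integral_mono hiFGw (hwint.const_mul _) (fun x => ?_)
    exact mul_le_mul_of_nonneg_right
      (mul_le_mul (hFbd x) (hGbd x) (hGnn x) hKTθ) (hwpos x).le
  -- final arithmetic
  rw [hD, hintθ, hintr, hintm]
  set A := ∫ x, F x * G x * w x ∂μ
  set B := ∫ x, G x * w x ∂μ
  set C := ∫ x, F x * w x ∂μ
  have hZne : Z ≠ 0 := hZpos.ne'
  have hrw : σ ^ 2 * A / Z - σ ^ 2 * (B * C) / Z ^ 2
      = σ ^ 2 * (A * Z - C * B) / Z ^ 2 := by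
    field_simp
  constructor
  · rw [hrw]
    apply div_nonneg (mul_nonneg (sq_nonneg σ) (by linarith)) (by positivity)
  · have h1 : 0 ≤ σ ^ 2 * (B * C) / Z ^ 2 := by positivity
    have h2 : σ ^ 2 * A / Z ≤ σ ^ 2 * (K T θ * K T r) := by
      rw [div_le_iff₀ hZpos]
      nlinarith [sq_nonneg σ]
    nlinarith [sq_nonneg σ, mul_nonneg hKTθ hKTr, mul_nonneg (sq_nonneg σ) (mul_nonneg hKTθ hKTr)]
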